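/- There is a constant C such that for all T > 0: ∑_{k ∈ (2πℤ)², k ≠ 0} exp(-T · d(k,0)³) ≤ C · T^(-5/6), where d(k,0) = |k1| + |k2|^(2/3). -/

import Mathlib

open Real

/-- The anisotropic distance to the origin of a lattice point `k = 2πm ∈ (2πℤ)²`:
`d(k,0) = |k₁| + |k₂|^(2/3)`. -/
noncomputable def latticeDist (m : ℤ × ℤ) : ℝ :=
  |2 * π * (m.1 : ℝ)| + |2 * π * (m.2 : ℝ)| ^ ((2 : ℝ) / 3)

section Aux

lemma term_le_geom' {T : ℝ} (hT : 0 < T) {k : ℕ} (hk : 1 ≤ k) (n : ℕ) :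
    Real.exp (-T * ((n:ℝ)+1)^k) ≤ Real.exp (-T)^(n+1) := by
  rw [← Real.exp_nat_mul]
  apply Real.exp_le_exp.2
  have h0 : (0:ℝ) ≤ (n:ℝ) := Nat.cast_nonneg n
  have h1 : ((n:ℝ)+1) ≤ ((n:ℝ)+1)^k := le_self_pow₀ (by linarith) (by omega)
  have h2 : ((n+1:ℕ):ℝ) = (n:ℝ)+1 := by push_cast; ring
  rw [h2]
  nlinarith

lemma summable_exp_pow' {T : ℝ} (hT : 0 < T) {k : ℕ} (hk : 1 ≤ k) :
    Summable (fun n : ℕ => Real.exp (-T * ((n:ℝ)+1)^k)) := by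
  apply Summable.of_nonneg_of_le (fun n => (Real.exp_pos _).le) (term_le_geom' hT hk)
  apply Summable.comp_injective (summable_geometric_of_lt_one (Real.exp_pos _).le
    (by rw [Real.exp_lt_one_iff]; linarith)) (add_left_injective 1)

lemma geom_exp_le' (u : ℝ) (hu : 0 < u) : ∑' n:ℕ, Real.exp (-u)^(n+1) ≤ u⁻¹ := by
  have hr0 : (0:ℝ) ≤ Real.exp (-u) := (Real.exp_pos _).le
  have hr1 : Real.exp (-u) < 1 := by rw [Real.exp_lt_one_iff]; linarith
  have h1r : 0 < 1 - Real.exp (-u) := by linarith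
  have hval : ∑' n:ℕ, Real.exp (-u)^(n+1) = Real.exp (-u) * (1 - Real.exp (-u))⁻¹ := by
    simp_rw [pow_succ']
    rw [tsum_mul_left, tsum_geometric_of_lt_one hr0 hr1]
  rw [hval, mul_inv_le_iff₀' h1r]
  have h1 := Real.add_one_le_exp u
  have h2 : Real.exp (-u) * Real.exp u = 1 := by rw [← Real.exp_add]; simp
  have hu' : (0:ℝ) < u⁻¹ := by positivity
  have h3 : u * u⁻¹ = 1 := mul_inv_cancel₀ (ne_of_gt hu)
  nlinarith [Real.exp_pos (-u), mul_pos hu' (Real.exp_pos (-u))]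

lemma summable_geom_shift' (u : ℝ) (hu : 0 < u) : Summable (fun n:ℕ => Real.exp (-u)^(n+1)) :=
  Summable.comp_injective (summable_geometric_of_lt_one (Real.exp_pos _).le
    (by rw [Real.exp_lt_one_iff]; linarith)) (add_left_injective 1)

lemma tsum_exp_pow_le_inv' {T : ℝ} (hT : 0 < T) {k : ℕ} (hk : 1 ≤ k) :
    ∑' n:ℕ, Real.exp (-T * ((n:ℝ)+1)^k) ≤ T⁻¹ :=
  le_trans (Summable.tsum_le_tsum (term_le_geom' hT hk) (summable_exp_pow' hT hk)
    (summable_geom_shift' T hT)) (geom_exp_le' T hT)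

lemma tsum_exp_pow_le_small' {T : ℝ} (hT0 : 0 < T) (hT1 : T ≤ 1) {k : ℕ} (hk : 1 ≤ k) :
    ∑' n:ℕ, Real.exp (-T * ((n:ℝ)+1)^k) ≤ 3 * T ^ (-(1:ℝ)/(k:ℝ)) := by
  set M : ℝ := T ^ (-(1:ℝ)/(k:ℝ)) with hMdef
  have hk0 : (0:ℝ) < (k:ℝ) := by exact_mod_cast hk
  have hM0 : 0 < M := Real.rpow_pos_of_pos hT0 _
  have hM1 : 1 ≤ M := by
    apply Real.one_le_rpow_of_pos_of_le_one_of_nonpos hT0 hT1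
    apply div_nonpos_of_nonpos_of_nonneg <;> norm_num
  set N : ℕ := ⌈M⌉₊ with hNdef
  have hNM : M ≤ (N:ℝ) := Nat.le_ceil M
  have hN2M : (N:ℝ) ≤ 2 * M := by
    have := (Nat.ceil_lt_add_one hM0.le)
    linarith
  have hNpos : (0:ℝ) < (N:ℝ) := lt_of_lt_of_le hM0 hNM
  have hsum := summable_exp_pow' hT0 hk (T := T)
  have hsplit := Summable.sum_add_tsum_nat_add (f := fun n:ℕ => Real.exp (-T * ((n:ℝ)+1)^k)) N hsum
  rw [← hsplit]
  have hhead : (∑ i ∈ Finset.range N, Real.exp (-T * ((i:ℝ)+1)^k)) ≤ (N:ℝ) := by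
    calc (∑ i ∈ Finset.range N, Real.exp (-T * ((i:ℝ)+1)^k))
        ≤ ∑ i ∈ Finset.range N, 1 := by
          apply Finset.sum_le_sum
          intro i _
          rw [Real.exp_le_one_iff]
          have : (0:ℝ) ≤ ((i:ℝ)+1)^k := by positivity
          nlinarith
      _ = (N:ℝ) := by simp
  set u : ℝ := T * (N:ℝ)^(k-1) with hudef
  have hu0 : 0 < u := by positivity
  have htail : (∑' i:ℕ, Real.exp (-T * (((i+N:ℕ):ℝ)+1)^k)) ≤ u⁻¹ := by
    refine le_trans (Summable.tsum_le_tsum (fun i => ?_) (by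
        have := hsum.comp_injective (add_left_injective N)
        exact this) (summable_geom_shift' u hu0)) (geom_exp_le' u hu0)
    rw [← Real.exp_nat_mul, Real.exp_le_exp]
    push_cast
    have hx : (N:ℝ) ≤ (i:ℝ) + (N:ℝ) + 1 := by
      have : (0:ℝ) ≤ (i:ℝ) := Nat.cast_nonneg i
      linarith
    have hxpow : (N:ℝ)^(k-1) * ((i:ℝ)+1) ≤ ((i:ℝ) + (N:ℝ) + 1)^k := by
      have h1 : (N:ℝ)^(k-1) ≤ ((i:ℝ) + (N:ℝ) + 1)^(k-1) :=
        pow_le_pow_left₀ hNpos.le hx _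
      have h2 : ((i:ℝ) + (N:ℝ) + 1)^k = ((i:ℝ) + (N:ℝ) + 1)^(k-1) * ((i:ℝ) + (N:ℝ) + 1) := by
        rw [← pow_succ]
        congr 1
        omega
      rw [h2]
      have hi1 : (0:ℝ) ≤ (i:ℝ) + 1 := by positivity
      have hNn : (0:ℝ) ≤ (N:ℝ)^(k-1) := by positivity
      nlinarith [Nat.cast_nonneg (α := ℝ) i]
    have : u * ((i:ℝ)+1) ≤ T * ((i:ℝ) + (N:ℝ) + 1)^k := by
      rw [hudef, mul_assoc]
      exact mul_le_mul_of_nonneg_left hxpow hT0.le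
    nlinarith
  have huinv : u⁻¹ ≤ M := by
    have hMk : M^(k-1) = T ^ (-(((k:ℝ)-1))/(k:ℝ)) := by
      rw [hMdef, ← Real.rpow_natCast (T ^ (-(1:ℝ)/(k:ℝ))) (k-1), ← Real.rpow_mul hT0.le]
      congr 1
      have : ((k-1:ℕ):ℝ) = (k:ℝ) - 1 := by
        have : (1:ℕ) ≤ k := hk
        push_cast [this]
        ring
      rw [this]
      field_simp
    have hu_ge : T ^ ((1:ℝ)/(k:ℝ)) ≤ u := by
      have h1 : M^(k-1) ≤ (N:ℝ)^(k-1) := pow_le_pow_left₀ hM0.le hNM _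
      have h2 : T * M^(k-1) ≤ u := by
        rw [hudef]
        exact mul_le_mul_of_nonneg_left h1 hT0.le
      have h3 : T * M^(k-1) = T ^ ((1:ℝ)/(k:ℝ)) := by
        rw [hMk]
        nth_rewrite 1 [← Real.rpow_one T]
        rw [← Real.rpow_add hT0]
        congr 1
        field_simp
        ring
      linarith
    have hTk : 0 < T ^ ((1:ℝ)/(k:ℝ)) := Real.rpow_pos_of_pos hT0 _
    have : u⁻¹ ≤ (T ^ ((1:ℝ)/(k:ℝ)))⁻¹ := inv_anti₀ hTk hu_ge
    rw [← Real.rpow_neg hT0.le] at this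
    rw [show -((1:ℝ)/(k:ℝ)) = -(1:ℝ)/(k:ℝ) by ring] at this
    exact this
  calc (∑ i ∈ Finset.range N, Real.exp (-T * ((i:ℝ)+1)^k))
        + ∑' i:ℕ, Real.exp (-T * (((i+N:ℕ):ℝ)+1)^k)
      ≤ (N:ℝ) + u⁻¹ := add_le_add hhead htail
    _ ≤ 2*M + M := add_le_add hN2M huinv
    _ = 3 * M := by ring

lemma int_exp_helper' {T : ℝ} (hT : 0 < T) {F : ℤ → ℝ} {k : ℕ} (hk : 1 ≤ k)
    (hF1 : ∀ n : ℕ, F n = Real.exp (-T * ((n:ℝ))^k))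
    (hF2 : ∀ n : ℕ, F (-(n+1)) = Real.exp (-T * ((n:ℝ)+1)^k)) :
    Summable F ∧ ∑' n:ℤ, F n = 1 + 2 * ∑' n:ℕ, Real.exp (-T * ((n:ℝ)+1)^k) := by
  have h2 : Summable (fun n:ℕ => F (-(n+1))) := by
    simp_rw [hF2]; exact summable_exp_pow' hT hk
  have h1 : Summable (fun n:ℕ => F (n:ℤ)) := by
    simp_rw [hF1]
    apply (summable_nat_add_iff 1).1
    convert summable_exp_pow' hT hk using 3 with n
    push_cast; rfl
    push_cast; ring
  refine ⟨Summable.of_nat_of_neg_add_one h1 h2, ?_⟩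
  rw [tsum_of_nat_of_neg_add_one h1 h2]
  have e1 : ∑' n:ℕ, F (n:ℤ) = 1 + ∑' n:ℕ, Real.exp (-T * ((n:ℝ)+1)^k) := by
    rw [Summable.tsum_eq_zero_add h1]
    congr 1
    · rw [hF1 0]
      simp [zero_pow (by omega : k ≠ 0)]
    · apply tsum_congr
      intro n
      rw [hF1 (n+1)]
      push_cast; ring_nf
  have e2 : ∑' n:ℕ, F (-(n+1)) = ∑' n:ℕ, Real.exp (-T * ((n:ℝ)+1)^k) :=
    tsum_congr (fun n => hF2 n)
  rw [e1, e2]; ring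

lemma latticeDist_cube_ge (m : ℤ × ℤ) :
    |((m.1:ℤ):ℝ)|^3 + ((m.2:ℤ):ℝ)^2 ≤ latticeDist m ^ 3 := by
  have hpi : (1:ℝ) ≤ 2 * π := by nlinarith [Real.pi_gt_three]
  set x : ℝ := |2 * π * (m.1 : ℝ)| with hxdef
  set y : ℝ := |2 * π * (m.2 : ℝ)| ^ ((2:ℝ)/3) with hydef
  have hx : 0 ≤ x := abs_nonneg _
  have hy : 0 ≤ y := Real.rpow_nonneg (abs_nonneg _) _
  have hx3 : |((m.1:ℤ):ℝ)|^3 ≤ x^3 := by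
    apply pow_le_pow_left₀ (abs_nonneg _)
    rw [hxdef, abs_mul, abs_of_nonneg (by linarith : (0:ℝ) ≤ 2 * π)]
    nlinarith [abs_nonneg ((m.1:ℤ):ℝ)]
  have hy3 : ((m.2:ℤ):ℝ)^2 ≤ y^3 := by
    have : y^(3:ℕ) = |2 * π * (m.2 : ℝ)| ^ (2:ℝ) := by
      rw [hydef, ← Real.rpow_natCast (|2 * π * (m.2 : ℝ)| ^ ((2:ℝ)/3)) 3,
        ← Real.rpow_mul (abs_nonneg _)]
      norm_num
    rw [this, Real.rpow_two, abs_mul, mul_pow, sq_abs, sq_abs]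
    have h4 : (1:ℝ) ≤ (2*π)^2 := by nlinarith
    nlinarith [sq_nonneg ((m.2:ℤ):ℝ)]
  have hsum : x^3 + y^3 ≤ (x + y)^3 := by
    nlinarith [mul_nonneg (mul_nonneg hx hx) hy, mul_nonneg (mul_nonneg hx hy) hy]
  calc |((m.1:ℤ):ℝ)|^3 + ((m.2:ℤ):ℝ)^2 ≤ x^3 + y^3 := add_le_add hx3 hy3
    _ ≤ (x + y)^3 := hsum
    _ = latticeDist m ^ 3 := rfl

end Aux

/-- Heat-kernel sum bound: the sum over nonzero lattice points of exp(-T d(k,0)^3) is at most C T^(-5/6). -/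
theorem lattice_exp_sum_bound :
    ∃ C : ℝ, 0 < C ∧ ∀ T : ℝ, 0 < T →
      Summable (fun m : {m : ℤ × ℤ // m ≠ 0} =>
        Real.exp (-T * latticeDist m ^ 3)) ∧
      (∑' m : {m : ℤ × ℤ // m ≠ 0}, Real.exp (-T * latticeDist m ^ 3))
        ≤ C * T ^ (-(5 : ℝ) / 6) := by
  refine ⟨48, by norm_num, fun T hT => ?_⟩
  set f : ℤ → ℝ := fun n => Real.exp (-T * |(n:ℝ)|^3) with hfdef
  set g : ℤ → ℝ := fun n => Real.exp (-T * (n:ℝ)^2) with hgdef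
  set a : ℝ := ∑' n:ℕ, Real.exp (-T * ((n:ℝ)+1)^3) with hadef
  set b : ℝ := ∑' n:ℕ, Real.exp (-T * ((n:ℝ)+1)^2) with hbdef
  have hf := int_exp_helper' hT (F := f) (k := 3) (by norm_num)
    (fun n => by simp [hfdef, abs_of_nonneg (Nat.cast_nonneg n : (0:ℝ) ≤ (n:ℝ))])
    (fun n => by
      simp only [hfdef]
      congr 1
      push_cast
      rw [abs_neg, abs_of_nonneg (by positivity : (0:ℝ) ≤ (n:ℝ)+1)])
  have hg := int_exp_helper' hT (F := g) (k := 2) (by norm_num)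
    (fun n => by simp [hgdef])
    (fun n => by
      simp only [hgdef]
      congr 1
      push_cast
      ring)
  have hfS : Summable f := hf.1
  have hgS : Summable g := hg.1
  have hFS : Summable (fun p : ℤ × ℤ => f p.1 * g p.2) :=
    hfS.mul_of_nonneg hgS (fun _ => (Real.exp_pos _).le) (fun _ => (Real.exp_pos _).le)
  have hterm : ∀ m : {m : ℤ × ℤ // m ≠ 0},
      Real.exp (-T * latticeDist m ^ 3) ≤ f (m:ℤ×ℤ).1 * g (m:ℤ×ℤ).2 := by
    intro m
    rw [hfdef, hgdef]
    simp only
    rw [← Real.exp_add, Real.exp_le_exp]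
    have := latticeDist_cube_ge (m : ℤ×ℤ)
    nlinarith
  have hsubS : Summable (fun m : {m : ℤ × ℤ // m ≠ 0} => f (m:ℤ×ℤ).1 * g (m:ℤ×ℤ).2) :=
    hFS.comp_injective Subtype.coe_injective
  have hgoalS : Summable (fun m : {m : ℤ × ℤ // m ≠ 0} => Real.exp (-T * latticeDist m ^ 3)) :=
    Summable.of_nonneg_of_le (fun _ => (Real.exp_pos _).le) hterm hsubS
  refine ⟨hgoalS, ?_⟩
  have hle1 : (∑' m : {m : ℤ × ℤ // m ≠ 0}, Real.exp (-T * latticeDist m ^ 3))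
      ≤ ∑' m : {m : ℤ × ℤ // m ≠ 0}, f (m:ℤ×ℤ).1 * g (m:ℤ×ℤ).2 :=
    Summable.tsum_le_tsum hterm hgoalS hsubS
  have hsubval : (∑' m : {m : ℤ × ℤ // m ≠ 0}, f (m:ℤ×ℤ).1 * g (m:ℤ×ℤ).2)
      = (∑' p : ℤ × ℤ, f p.1 * g p.2) - 1 := by
    have h0 : f (0:ℤ) * g (0:ℤ) = 1 := by simp [hfdef, hgdef]
    have hind : (∑' m : {m : ℤ × ℤ // m ≠ 0}, f (m:ℤ×ℤ).1 * g (m:ℤ×ℤ).2)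
        = ∑' p : ℤ × ℤ, Set.indicator {m : ℤ × ℤ | m ≠ 0} (fun p => f p.1 * g p.2) p :=
      tsum_subtype {m : ℤ × ℤ | m ≠ 0} (fun p => f p.1 * g p.2)
    rw [hind]
    have hite := Summable.tsum_eq_add_tsum_ite hFS (0 : ℤ × ℤ)
    have : (∑' p : ℤ × ℤ, Set.indicator {m : ℤ × ℤ | m ≠ 0} (fun p => f p.1 * g p.2) p)
        = ∑' p : ℤ × ℤ, if p = 0 then 0 else f p.1 * g p.2 := by
      apply tsum_congr
      intro p
      by_cases hp : p = 0 <;> simp [Set.indicator, hp]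
    rw [this]
    have h00 : f (0:ℤ×ℤ).1 * g (0:ℤ×ℤ).2 = 1 := h0
    linarith [hite, h00.symm ▸ hite]
  have hABval : (∑' p : ℤ × ℤ, f p.1 * g p.2) = (1 + 2*a) * (1 + 2*b) := by
    rw [Summable.tsum_prod' hFS (fun i => hgS.mul_left (f i))]
    simp_rw [tsum_mul_left]
    rw [tsum_mul_right, hf.2, hg.2]
  have ha0 : 0 ≤ a := tsum_nonneg (fun n => (Real.exp_pos _).le)
  have hb0 : 0 ≤ b := tsum_nonneg (fun n => (Real.exp_pos _).le)
  have hT56 : 0 < T ^ (-(5:ℝ)/6) := Real.rpow_pos_of_pos hT _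
  have key : 2*a + 2*b + 4*(a*b) ≤ 48 * T ^ (-(5:ℝ)/6) := by
    rcases le_or_gt T 1 with hT1 | hT1
    · have ha : a ≤ 3 * T ^ (-(1:ℝ)/3) := by
        have h := tsum_exp_pow_le_small' hT hT1 (k := 3) (by norm_num)
        rw [show (((3:ℕ)):ℝ) = (3:ℝ) by norm_num] at h
        exact h
      have hb : b ≤ 3 * T ^ (-(1:ℝ)/2) := by
        have h := tsum_exp_pow_le_small' hT hT1 (k := 2) (by norm_num)
        rw [show (((2:ℕ)):ℝ) = (2:ℝ) by norm_num] at h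
        exact h
      have h13 : (0:ℝ) < T ^ (-(1:ℝ)/3) := Real.rpow_pos_of_pos hT _
      have h12 : (0:ℝ) < T ^ (-(1:ℝ)/2) := Real.rpow_pos_of_pos hT _
      have hc1 : T ^ (-(1:ℝ)/3) ≤ T ^ (-(5:ℝ)/6) :=
        Real.rpow_le_rpow_of_exponent_ge hT hT1 (by norm_num)
      have hc2 : T ^ (-(1:ℝ)/2) ≤ T ^ (-(5:ℝ)/6) :=
        Real.rpow_le_rpow_of_exponent_ge hT hT1 (by norm_num)
      have hmul : T ^ (-(1:ℝ)/3) * T ^ (-(1:ℝ)/2) = T ^ (-(5:ℝ)/6) := by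
        rw [← Real.rpow_add hT]
        norm_num
      have hab : a * b ≤ 9 * T ^ (-(5:ℝ)/6) := by
        calc a * b ≤ (3 * T ^ (-(1:ℝ)/3)) * (3 * T ^ (-(1:ℝ)/2)) :=
              mul_le_mul ha hb hb0 (by positivity)
          _ = 9 * (T ^ (-(1:ℝ)/3) * T ^ (-(1:ℝ)/2)) := by ring
          _ = 9 * T ^ (-(5:ℝ)/6) := by rw [hmul]
      nlinarith
    · have ha : a ≤ T⁻¹ := tsum_exp_pow_le_inv' hT (k := 3) (by norm_num)
      have hb : b ≤ T⁻¹ := tsum_exp_pow_le_inv' hT (k := 2) (by norm_num)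
      have hinv : T⁻¹ ≤ T ^ (-(5:ℝ)/6) := by
        rw [← Real.rpow_neg_one T]
        exact Real.rpow_le_rpow_of_exponent_le hT1.le (by norm_num)
      have hinv1 : T⁻¹ ≤ 1 := by
        rw [inv_le_one_iff₀]
        right; linarith
      have hinv0 : 0 ≤ T⁻¹ := by positivity
      have hab : a * b ≤ T⁻¹ := by
        calc a * b ≤ T⁻¹ * T⁻¹ := mul_le_mul ha hb hb0 hinv0
          _ ≤ T⁻¹ * 1 := by nlinarith
          _ = T⁻¹ := mul_one _
      nlinarith
  calc (∑' m : {m : ℤ × ℤ // m ≠ 0}, Real.exp (-T * latticeDist m ^ 3))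
      ≤ ∑' m : {m : ℤ × ℤ // m ≠ 0}, f (m:ℤ×ℤ).1 * g (m:ℤ×ℤ).2 := hle1
    _ = (∑' p : ℤ × ℤ, f p.1 * g p.2) - 1 := hsubval
    _ = (1 + 2*a) * (1 + 2*b) - 1 := by rw [hABval]
    _ = 2*a + 2*b + 4*(a*b) := by ring
    _ ≤ 48 * T ^ (-(5:ℝ)/6) := key
    _ = 48 * T ^ (-(5:ℝ)/6) := rfl
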